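/- Let T be a finite tree (a connected acyclic simple graph), let r be a vertex of T, and let p be a closed walk from r to r in which every dart of T appears exactly once. Let v₁, …, v_{2n−1} be the sequence of vertices visited by p, and for each vertex v let i_v := min{i : v_i = v} and j_v := max{j : v_j = v}. Then for any two vertices u and v, the integer intervals [i_u, j_u] and [i_v, j_v] are either nested (one contained in the other) or disjoint. -/

import Mathlib

set_option linter.unusedSectionVars false


/-- The index of the first occurrence of `v` in the list `l`. -/
def firstOcc {V : Type*} [DecidableEq V] (l : List V) (v : V) : ℕ := l.idxOf v

/-- The index of the last occurrence of `v` in the list `l`. -/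
def lastOcc {V : Type*} [DecidableEq V] (l : List V) (v : V) : ℕ :=
  l.length - 1 - l.reverse.idxOf v

namespace EulerAux
open SimpleGraph Walk
variable {V : Type*} [DecidableEq V] {T : SimpleGraph V}

noncomputable def pth (hT : T.IsTree) (r w : V) : T.Walk r w :=
  (hT.existsUnique_path r w).exists.choose

lemma pth_isPath (hT : T.IsTree) (r w : V) : (pth hT r w).IsPath :=
  (hT.existsUnique_path r w).exists.choose_spec

lemma pth_unique (hT : T.IsTree) {r w : V} (q : T.Walk r w) (hq : q.IsPath) :
    q = pth hT r w :=
  (hT.existsUnique_path r w).unique hq (pth_isPath hT r w)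

lemma mem_pth_self (hT : T.IsTree) (r v : V) : v ∈ (pth hT r v).support :=
  end_mem_support _

lemma mem_pth_root (hT : T.IsTree) (r v : V) : r ∈ (pth hT r v).support :=
  start_mem_support _

lemma pth_self (hT : T.IsTree) (r : V) : pth hT r r = Walk.nil :=
  (pth_unique hT Walk.nil (IsPath.nil)).symm

lemma mem_pth_root_iff (hT : T.IsTree) {r v : V} : v ∈ (pth hT r r).support ↔ v = r := by
  rw [pth_self]; simp

lemma anc_trans (hT : T.IsTree) {r x y z : V} (hxy : x ∈ (pth hT r y).support)
    (hyz : y ∈ (pth hT r z).support) : x ∈ (pth hT r z).support := by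
  have h1 : ((pth hT r z).takeUntil y hyz) = pth hT r y :=
    pth_unique hT _ ((pth_isPath hT r z).takeUntil hyz)
  have h2 := support_takeUntil_subset (pth hT r z) hyz
  rw [h1] at h2
  exact h2 hxy

lemma anc_total (hT : T.IsTree) {r u v w : V} (hu : u ∈ (pth hT r w).support)
    (hv : v ∈ (pth hT r w).support) :
    u ∈ (pth hT r v).support ∨ v ∈ (pth hT r u).support := by
  set P := pth hT r w with hP
  by_cases h : u ∈ (P.takeUntil v hv).support
  · left
    rwa [pth_unique hT _ ((pth_isPath hT r w).takeUntil hv)] at h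
  · right
    have hu2 : u ∈ (P.dropUntil v hv).support := by
      have := P.take_spec hv
      rw [← this, mem_support_append_iff] at hu
      tauto
    set Q : T.Walk r u := (P.takeUntil v hv).append ((P.dropUntil v hv).takeUntil u hu2) with hQ
    have hsplit : P = Q.append ((P.dropUntil v hv).dropUntil u hu2) := by
      rw [hQ, ← append_assoc, (P.dropUntil v hv).take_spec hu2, P.take_spec hv]
    have hQpath : Q.IsPath := by
      have := pth_isPath hT r w
      rw [← hP, hsplit] at this
      exact this.of_append_left
    have hvQ : v ∈ Q.support := by
      rw [hQ, mem_support_append_iff]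
      exact Or.inl (end_mem_support _)
    rwa [pth_unique hT Q hQpath] at hvQ

lemma isPath_concat {x y z : V} {q : T.Walk x y} (hq : q.IsPath) (h : T.Adj y z)
    (hz : z ∉ q.support) : (q.concat h).IsPath := by
  have h2 : (q.concat h).reverse.IsPath := by
    rw [reverse_concat, cons_isPath_iff]
    exact ⟨hq.reverse, by simpa [support_reverse] using hz⟩
  simpa [concat_eq_append] using h2.reverse

lemma parent_unique (hT : T.IsTree) {r v y w : V} (hy : T.Adj v y)
    (hvy : v ∉ (pth hT r y).support) (hw : T.Adj v w) (hvw : v ∉ (pth hT r w).support) :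
    y = w := by
  have h1 : ((pth hT r y).concat hy.symm) = pth hT r v :=
    pth_unique hT _ (isPath_concat (pth_isPath _ _ _) hy.symm hvy)
  have h2 : ((pth hT r w).concat hw.symm) = pth hT r v :=
    pth_unique hT _ (isPath_concat (pth_isPath _ _ _) hw.symm hvw)
  have h3 := h1.trans h2.symm
  have h4 : (pth hT r y).reverse.support = (pth hT r w).reverse.support := by
    have := congrArg (fun q => q.reverse.support) h3
    simpa [reverse_concat] using this
  rw [(pth hT r y).reverse.support_eq_cons, (pth hT r w).reverse.support_eq_cons] at h4
  injection h4

lemma cut (hT : T.IsTree) {r v w : V} (hvw : T.Adj v w) (hw : v ∉ (pth hT r w).support) :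
    ∀ x y : V, T.Adj x y → v ∈ (pth hT r x).support → v ∉ (pth hT r y).support →
      x = v ∧ y = w := by
  intro x y hxy hvx hvy
  have hx : x = v := by
    by_cases hxs : x ∈ (pth hT r y).support
    · exfalso
      have h1 : ((pth hT r y).takeUntil x hxs) = pth hT r x :=
        pth_unique hT _ ((pth_isPath hT r y).takeUntil hxs)
      have h2 := support_takeUntil_subset (pth hT r y) hxs
      rw [h1] at h2
      exact hvy (h2 hvx)
    · have hQ : ((pth hT r y).concat hxy.symm) = pth hT r x :=
        pth_unique hT _ (isPath_concat (pth_isPath _ _ _) hxy.symm hxs)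
      rw [← hQ] at hvx
      simp only [support_concat, List.concat_eq_append, List.mem_append, List.mem_singleton] at hvx
      rcases hvx with h | h
      · exact absurd h hvy
      · exact h.symm
  subst hx
  exact ⟨rfl, parent_unique hT hxy hvy hvw hw⟩

lemma exists_parent (hT : T.IsTree) {r v : V} (hv : v ≠ r) :
    ∃ w, T.Adj v w ∧ v ∉ (pth hT r w).support := by
  obtain ⟨w, h, q, hq⟩ := (pth hT r v).reverse.exists_eq_cons_of_ne hv
  have hrev : (pth hT r v).reverse.IsPath := (pth_isPath hT r v).reverse
  rw [hq, cons_isPath_iff] at hrev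
  refine ⟨w, h, ?_⟩
  have : q.reverse = pth hT r w := pth_unique hT _ hrev.1.reverse
  rw [← this, support_reverse, List.mem_reverse]
  exact hrev.2

lemma indexOf_le_of_getElem {α} [DecidableEq α] {v : α} :
    ∀ (l : List α) (i : ℕ) (hi : i < l.length), l[i] = v → l.idxOf v ≤ i := by
  intro l
  induction l with
  | nil => simp
  | cons x t ih =>
    intro i hi hv
    cases i with
    | zero => simp at hv; simp [hv, List.idxOf_cons_self]
    | succ n =>
      by_cases hx : x = v
      · simp [hx, List.idxOf_cons_self]
      · rw [List.idxOf_cons_ne _ hx]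
        have := ih n (by simpa using hi) (by simpa using hv)
        omega

lemma darts_getElem_fst {V : Type*} {T : SimpleGraph V} {x y : V} (p : T.Walk x y) (k : ℕ)
    (hk : k < p.darts.length) :
    (p.darts[k]).fst = p.support.getD k x := by
  have hk1 : k < p.support.length := by
    rw [length_support]; rw [length_darts] at hk; omega
  rw [List.getD_eq_getElem _ _ hk1]
  have h1 : (p.darts.map (fun d => d.fst))[k]'(by simpa using hk) = p.darts[k].fst :=
    List.getElem_map _
  rw [← h1]
  have h2 := List.getElem_of_eq (map_fst_darts p) (by simpa using hk)
  rw [h2]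
  exact List.getElem_dropLast ..

lemma darts_getElem_snd {V : Type*} {T : SimpleGraph V} {x y : V} (p : T.Walk x y) (k : ℕ)
    (hk : k < p.darts.length) :
    (p.darts[k]).snd = p.support.getD (k+1) x := by
  have hk1 : k + 1 < p.support.length := by
    rw [length_support]; rw [length_darts] at hk; omega
  rw [List.getD_eq_getElem _ _ hk1]
  have h1 : (p.darts.map (fun d => d.snd))[k]'(by simpa using hk) = p.darts[k].snd :=
    List.getElem_map _
  rw [← h1]
  have h2 := List.getElem_of_eq (map_snd_darts p) (by simpa using hk)
  rw [h2]
  exact List.getElem_tail ..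
lemma firstOcc_eq {α} [DecidableEq α] {l : List α} {v : α} {i : ℕ} (hi : i < l.length)
    (hv : l[i] = v) (hmin : ∀ k (hk : k < l.length), l[k] = v → i ≤ k) :
    firstOcc l v = i := by
  have hmem : v ∈ l := hv ▸ List.getElem_mem _
  have h1 : l.idxOf v < l.length := List.idxOf_lt_length_iff.mpr hmem
  have h2 : l[l.idxOf v]'h1 = v := List.getElem_idxOf h1
  have h3 := hmin _ h1 h2
  have h4 : l.idxOf v ≤ i := indexOf_le_of_getElem l i hi hv
  simp only [firstOcc]; omega

lemma lastOcc_eq {α} [DecidableEq α] {l : List α} {v : α} {i : ℕ} (hi : i < l.length)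
    (hv : l[i] = v) (hmax : ∀ k (hk : k < l.length), l[k] = v → k ≤ i) :
    lastOcc l v = i := by
  have hmem : v ∈ l.reverse := by rw [List.mem_reverse]; exact hv ▸ List.getElem_mem _
  have h1 : l.reverse.idxOf v < l.length := by
    have := List.idxOf_lt_length_iff.mpr hmem; simpa using this
  have h2 : l.reverse[l.reverse.idxOf v]'(by simpa using h1) = v :=
    List.getElem_idxOf (by simpa using h1)
  rw [List.getElem_reverse] at h2
  have h4 := hmax _ (by omega) h2
  have h5 : l.reverse[l.length - 1 - i]'(by simp; omega) = v := by
    rw [List.getElem_reverse]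
    have he : l.length - 1 - (l.length - 1 - i) = i := by omega
    simp only [he]; exact hv
  have h6 := indexOf_le_of_getElem l.reverse (l.length - 1 - i) (by simp; omega) h5
  simp only [lastOcc]; omega

lemma interval_eq (hT : T.IsTree) {r : V} (p : T.Walk r r) (hp : p.darts.Nodup)
    (hall : ∀ d : T.Dart, d ∈ p.darts) (v : V) :
    ∀ k, k < p.support.length →
      (v ∈ (pth hT r (p.support.getD k r)).support ↔
        firstOcc p.support v ≤ k ∧ k ≤ lastOcc p.support v) := by
  set l := p.support with hl
  have hlen : l.length = p.length + 1 := length_support p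
  have hd : p.darts.length = p.length := length_darts p
  by_cases hvr : v = r
  · subst hvr
    have hfo : firstOcc l v = 0 := by
      simp only [firstOcc, hl]
      rw [support_eq_cons, List.idxOf_cons_self]
    have hlo : lastOcc l v = l.length - 1 := by
      have hrev : l.reverse = v :: p.reverse.support.tail := by
        rw [hl, ← support_reverse]; exact p.reverse.support_eq_cons
      simp only [lastOcc, hrev, List.idxOf_cons_self]
      omega
    intro k hk
    rw [hfo, hlo]
    constructor
    · intro _; omega
    · intro _; exact mem_pth_root hT v _
  · obtain ⟨w, hadj, hwpar⟩ := exists_parent hT hvr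
    obtain ⟨a, ha, hda⟩ := List.getElem_of_mem (hall ⟨(w, v), hadj.symm⟩)
    obtain ⟨b, hb, hdb⟩ := List.getElem_of_mem (hall ⟨(v, w), hadj⟩)
    set m : ℕ → Prop := fun k => v ∈ (pth hT r (l.getD k r)).support with hm
    have hla : l.getD a r = w := by rw [← darts_getElem_fst p a ha, hda]
    have hla1 : l.getD (a+1) r = v := by rw [← darts_getElem_snd p a ha, hda]
    have hlb : l.getD b r = v := by rw [← darts_getElem_fst p b hb, hdb]
    have hlb1 : l.getD (b+1) r = w := by rw [← darts_getElem_snd p b hb, hdb]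
    have hma : ¬ m a := by simp only [hm]; rw [hla]; exact hwpar
    have hma1 : m (a+1) := by simp only [hm]; rw [hla1]; exact mem_pth_self hT r v
    have hmb : m b := by simp only [hm]; rw [hlb]; exact mem_pth_self hT r v
    have hmb1 : ¬ m (b+1) := by simp only [hm]; rw [hlb1]; exact hwpar
    have hm0 : ¬ m 0 := by
      have h0 : l.getD 0 r = r := by rw [hl, support_eq_cons]; rfl
      simp only [hm]
      rw [h0, mem_pth_root_iff hT]
      exact hvr
    have hstep : ∀ k, k < p.darts.length → k ≠ a → k ≠ b → (m k ↔ m (k+1)) := by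
      intro k hk hka hkb
      have hadjk : T.Adj (l.getD k r) (l.getD (k+1) r) := by
        rw [← darts_getElem_fst p k hk, ← darts_getElem_snd p k hk]
        exact p.darts[k].adj
      constructor
      · intro hmk
        by_contra hmk1
        obtain ⟨he1, he2⟩ := cut hT hadj hwpar _ _ hadjk hmk hmk1
        apply hkb
        have hde : p.darts[k] = (⟨(v, w), hadj⟩ : T.Dart) := by
          ext
          · rw [darts_getElem_fst p k hk, he1]
          · rw [darts_getElem_snd p k hk, he2]
        rw [← hdb] at hde
        exact (List.Nodup.getElem_inj_iff hp).mp hde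
      · intro hmk1
        by_contra hmk
        obtain ⟨he1, he2⟩ := cut hT hadj hwpar _ _ hadjk.symm hmk1 hmk
        apply hka
        have hde : p.darts[k] = (⟨(w, v), hadj.symm⟩ : T.Dart) := by
          ext
          · rw [darts_getElem_fst p k hk, he2]
          · rw [darts_getElem_snd p k hk, he1]
        rw [← hda] at hde
        exact (List.Nodup.getElem_inj_iff hp).mp hde
    have hconst : ∀ i j, i ≤ j → j < l.length →
        (∀ k, i ≤ k → k < j → k ≠ a ∧ k ≠ b) → (m i ↔ m j) := by
      intro i j hij
      induction j, hij using Nat.le_induction with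
      | base => exact fun _ _ => Iff.rfl
      | succ n hn ih =>
        intro hnlen hno
        have h1 := ih (by omega) (fun k hk1 hk2 => hno k hk1 (by omega))
        have h2 := hstep n (by omega) (hno n hn (by omega)).1 (hno n hn (by omega)).2
        exact h1.trans h2
    have hab : a ≠ b := by
      intro h
      have h1 : p.darts[a]? = some (⟨(w, v), hadj.symm⟩ : T.Dart) := by
        rw [List.getElem?_eq_getElem ha, hda]
      have h2 : p.darts[b]? = some (⟨(v, w), hadj⟩ : T.Dart) := by
        rw [List.getElem?_eq_getElem hb, hdb]
      rw [h, h2] at h1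
      have h3 := Option.some.inj h1
      have h4 : v = w := congrArg (fun d : T.Dart => d.fst) h3
      exact hadj.ne h4
    have haltb : a < b := by
      by_contra h
      have := hconst 0 b (by omega) (by omega) (fun k hk1 hk2 => ⟨by omega, by omega⟩)
      exact hm0 (this.mpr hmb)
    have hchar : ∀ k, k < l.length → (m k ↔ a + 1 ≤ k ∧ k ≤ b) := by
      intro k hk
      constructor
      · intro hmk
        constructor
        · by_contra h
          have := hconst k a (by omega) (by omega) (fun j hj1 hj2 => ⟨by omega, by omega⟩)
          exact hma (this.mp hmk)
        · by_contra h
          have := hconst (b+1) k (by omega) hk (fun j hj1 hj2 => ⟨by omega, by omega⟩)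
          exact hmb1 (this.mpr hmk)
      · rintro ⟨h1, h2⟩
        have := hconst (a+1) k h1 hk (fun j hj1 hj2 => ⟨by omega, by omega⟩)
        exact this.mp hma1
    have hgetD : ∀ k (hk : k < l.length), l.getD k r = l[k]'hk := fun k hk =>
      List.getD_eq_getElem _ _ hk
    have hfo : firstOcc l v = a + 1 := by
      apply firstOcc_eq (show a + 1 < l.length by omega)
        (by rw [← hgetD (a+1) (by omega)]; exact hla1)
      intro k hk hkv
      have hmk : m k := by
        simp only [hm]
        rw [hgetD k hk, hkv]
        exact mem_pth_self hT r v
      exact ((hchar k hk).mp hmk).1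
    have hlo : lastOcc l v = b := by
      apply lastOcc_eq (show b < l.length by omega)
        (by rw [← hgetD b (by omega)]; exact hlb)
      intro k hk hkv
      have hmk : m k := by
        simp only [hm]
        rw [hgetD k hk, hkv]
        exact mem_pth_self hT r v
      exact ((hchar k hk).mp hmk).2
    intro k hk
    rw [hfo, hlo]
    exact hchar k hk

end EulerAux

theorem euler_tour_intervals_laminar {V : Type*} [Fintype V] [DecidableEq V]
    (T : SimpleGraph V) (hT : T.IsTree) (r : V)
    (p : T.Walk r r) (hp : p.darts.Nodup) (hall : ∀ d : T.Dart, d ∈ p.darts)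
    (u v : V) :
    Set.Icc (firstOcc p.support u) (lastOcc p.support u) ⊆
        Set.Icc (firstOcc p.support v) (lastOcc p.support v) ∨
      Set.Icc (firstOcc p.support v) (lastOcc p.support v) ⊆
        Set.Icc (firstOcc p.support u) (lastOcc p.support u) ∨
      Disjoint (Set.Icc (firstOcc p.support u) (lastOcc p.support u))
        (Set.Icc (firstOcc p.support v) (lastOcc p.support v)) := by
  classical
  have hlen : 0 < p.support.length := by rw [SimpleGraph.Walk.length_support]; omega
  have hlast : ∀ x : V, lastOcc p.support x < p.support.length := by
    intro x; simp only [lastOcc]; omega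
  by_cases hdisj : Disjoint (Set.Icc (firstOcc p.support u) (lastOcc p.support u))
      (Set.Icc (firstOcc p.support v) (lastOcc p.support v))
  · exact Or.inr (Or.inr hdisj)
  obtain ⟨k, hku, hkv⟩ := Set.not_disjoint_iff.mp hdisj
  rw [Set.mem_Icc] at hku hkv
  have hk : k < p.support.length := lt_of_le_of_lt hku.2 (hlast u)
  have hu := (EulerAux.interval_eq hT p hp hall u k hk).mpr hku
  have hv := (EulerAux.interval_eq hT p hp hall v k hk).mpr hkv
  rcases EulerAux.anc_total hT hu hv with h | h
  · right; left
    intro k' hk'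
    rw [Set.mem_Icc] at hk' ⊢
    have hk'len : k' < p.support.length := lt_of_le_of_lt hk'.2 (hlast v)
    have h1 := (EulerAux.interval_eq hT p hp hall v k' hk'len).mpr hk'
    exact (EulerAux.interval_eq hT p hp hall u k' hk'len).mp (EulerAux.anc_trans hT h h1)
  · left
    intro k' hk'
    rw [Set.mem_Icc] at hk' ⊢
    have hk'len : k' < p.support.length := lt_of_le_of_lt hk'.2 (hlast u)
    have h1 := (EulerAux.interval_eq hT p hp hall u k' hk'len).mpr hk'
    exact (EulerAux.interval_eq hT p hp hall v k' hk'len).mp (EulerAux.anc_trans hT h h1)
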